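/- For every f in the space of flows 𝔽 and all s ≤ t and x, c ∈ ℝ, the following equivalence holds: f(s,x;t) < c if and only if there exists a rational pair (p,u) ∈ ℚ² with p < s such that f(p,u;s) ≥ x and f(p,u;t) < c. -/

import Mathlib

/-- The range of the flow `f` at time `s`: all values `f r x s` with `r < s`. -/
def rangeAt (f : ℝ → ℝ → ℝ → ℝ) (s : ℝ) : Set ℝ :=
  {y | ∃ r x : ℝ, r < s ∧ f r x s = y}

/-- `f` belongs to the space of flows 𝔽: each trajectory `t ↦ f s x t` is continuous on
`[s,∞)` with `f s x s = x`, and conditions F1–F4 hold. -/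
def IsFlow (f : ℝ → ℝ → ℝ → ℝ) : Prop :=
  (∀ s x : ℝ, f s x s = x) ∧
  (∀ s x : ℝ, ContinuousOn (fun t => f s x t) (Set.Ici s)) ∧
  -- F1
  (∀ r s t x : ℝ, r ≤ s → s ≤ t → f s (f r x s) t = f r x t) ∧
  -- F2
  (∀ s : ℝ, Dense (rangeAt f s)) ∧
  -- F3
  (∀ s t : ℝ, s ≤ t → ∀ x ∉ rangeAt f s,
    ContinuousWithinAt (fun y => f s y t) (Set.Ici x) x) ∧
  -- F4
  (∀ s t x : ℝ, s < t → ∃ r y : ℝ, r < t ∧ y ∉ rangeAt f r ∧ f s x t = f r y t)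

open Set Filter

/-- No-crossing: if two trajectories are ordered at a common time `σ`, they stay ordered
at any later time `τ`. -/
lemma flow_no_cross (f : ℝ → ℝ → ℝ → ℝ) (hf : IsFlow f) {r r' σ τ x x' : ℝ}
    (hrσ : r ≤ σ) (hr'σ : r' ≤ σ) (hστ : σ ≤ τ)
    (h : f r x σ ≤ f r' x' σ) : f r x τ ≤ f r' x' τ := by
  obtain ⟨h0, hcont, hF1, -, -, -⟩ := hf
  by_contra hlt
  push_neg at hlt
  have hgc : ContinuousOn (fun u => f r x u - f r' x' u) (Icc σ τ) := by
    apply ContinuousOn.sub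
    · exact (hcont r x).mono (fun u hu => le_trans hrσ hu.1)
    · exact (hcont r' x').mono (fun u hu => le_trans hr'σ hu.1)
  have h0mem : (0:ℝ) ∈ Icc (f r x σ - f r' x' σ) (f r x τ - f r' x' τ) :=
    ⟨by linarith, by linarith⟩
  obtain ⟨τ₀, hτ₀, hgτ₀⟩ := intermediate_value_Icc hστ hgc h0mem
  have heq : f r x τ₀ = f r' x' τ₀ := by
    have : f r x τ₀ - f r' x' τ₀ = 0 := hgτ₀
    linarith
  have e1 : f τ₀ (f r x τ₀) τ = f r x τ := hF1 r τ₀ τ x (le_trans hrσ hτ₀.1) hτ₀.2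
  have e2 : f τ₀ (f r' x' τ₀) τ = f r' x' τ := hF1 r' τ₀ τ x' (le_trans hr'σ hτ₀.1) hτ₀.2
  rw [heq, e2] at e1
  linarith

/-- Monotonicity of the flow in its starting point. -/
lemma flow_mono (f : ℝ → ℝ → ℝ → ℝ) (hf : IsFlow f) {p σ u v : ℝ}
    (hpσ : p ≤ σ) (huv : u ≤ v) : f p u σ ≤ f p v σ := by
  apply flow_no_cross f hf le_rfl le_rfl hpσ
  rw [hf.1 p u, hf.1 p v]
  exact huv

/-- Rationalization: from a real trajectory pair with slack, produce rational witnesses. -/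
lemma flow_rat_wit (f : ℝ → ℝ → ℝ → ℝ) (hf : IsFlow f) {ρ s t x c w w' : ℝ}
    (hρs : ρ < s) (hst : s ≤ t) (hww' : w < w')
    (hws : x ≤ f ρ w s) (hw't : f ρ w' t < c) :
    ∃ p u : ℚ, (p:ℝ) < s ∧ x ≤ f (p:ℝ) (u:ℝ) s ∧ f (p:ℝ) (u:ℝ) t < c := by
  have h0 := hf.1
  have hcont := hf.2.1
  have hF1 := hf.2.2.1
  have hc1 : ContinuousWithinAt (fun τ => f ρ w' τ - f ρ w τ) (Ici ρ) ρ :=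
    ((hcont ρ w').continuousWithinAt (mem_Ici.mpr le_rfl)).sub
      ((hcont ρ w).continuousWithinAt (mem_Ici.mpr le_rfl))
  have hval : (fun τ => f ρ w' τ - f ρ w τ) ρ = w' - w := by
    simp [h0]
  have hten : Tendsto (fun τ => f ρ w' τ - f ρ w τ) (nhdsWithin ρ (Ici ρ)) (nhds (w' - w)) := by
    have := hc1
    unfold ContinuousWithinAt at this
    rwa [hval] at this
  have hev1 : ∀ᶠ τ in nhdsWithin ρ (Ici ρ), (0:ℝ) < f ρ w' τ - f ρ w τ :=
    hten.eventually (eventually_gt_nhds (by linarith))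
  have hev2 : ∀ᶠ τ in nhdsWithin ρ (Ioi ρ), (0:ℝ) < f ρ w' τ - f ρ w τ :=
    hev1.filter_mono (nhdsWithin_mono ρ Ioi_subset_Ici_self)
  have hev3 : ∀ᶠ τ in nhdsWithin ρ (Ioi ρ), τ ∈ Ioo ρ s :=
    eventually_mem_set.mpr (Ioo_mem_nhdsGT_of_mem ⟨le_rfl, hρs⟩)
  obtain ⟨b, hb, hsub⟩ := mem_nhdsGT_iff_exists_Ioo_subset.mp (hev2.and hev3)
  obtain ⟨p, hp1, hp2⟩ := exists_rat_btwn (mem_Ioi.mp hb)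
  obtain ⟨hdiff, hpρ, hps⟩ := hsub ⟨hp1, hp2⟩
  -- pick a rational value between f ρ w p and f ρ w' p
  obtain ⟨u, hu1, hu2⟩ := exists_rat_btwn (show f ρ w (p:ℝ) < f ρ w' (p:ℝ) by linarith)
  have hpt : (p:ℝ) ≤ t := le_trans hps.le hst
  refine ⟨p, u, hps, ?_, ?_⟩
  · have h1 : f (p:ℝ) (f ρ w (p:ℝ)) s ≤ f (p:ℝ) (u:ℝ) s :=
      flow_mono f hf hps.le hu1.le
    rw [hF1 ρ (p:ℝ) s w hpρ.le hps.le] at h1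
    exact le_trans hws h1
  · have h2 : f (p:ℝ) (u:ℝ) t ≤ f (p:ℝ) (f ρ w' (p:ℝ)) t :=
      flow_mono f hf hpt hu2.le
    rw [hF1 ρ (p:ℝ) t w' hpρ.le hpt] at h2
    linarith

theorem flow_lt_iff_exists_rat (f : ℝ → ℝ → ℝ → ℝ) (hf : IsFlow f)
    (s t x c : ℝ) (hst : s ≤ t) :
    f s x t < c ↔ ∃ p u : ℚ, (p : ℝ) < s ∧ x ≤ f p u s ∧ f p u t < c := by
  have h0 := hf.1
  have hcont := hf.2.1
  have hF1 := hf.2.2.1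
  have hF2 := hf.2.2.2.1
  have hF3 := hf.2.2.2.2.1
  have hF4 := hf.2.2.2.2.2
  constructor
  · -- forward direction
    intro h
    by_cases hx : x ∈ rangeAt f s
    · -- x is attained at time s by some trajectory
      obtain ⟨r, z, hrs, hrz⟩ := hx
      obtain ⟨r₅, y₅, hr₅s, hy₅, heq⟩ := hF4 r s z hrs
      have hval : f r₅ y₅ s = x := by rw [← heq, hrz]
      have hyt : f r₅ y₅ t = f s x t := by
        rw [← hF1 r₅ s t y₅ hr₅s.le hst, hval]
      have hcw : ContinuousWithinAt (fun y => f r₅ y t) (Set.Ici y₅) y₅ :=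
        hF3 r₅ t (le_trans hr₅s.le hst) y₅ hy₅
      have hev : ∀ᶠ w in nhdsWithin y₅ (Set.Ici y₅), f r₅ w t < c := by
        have hlt : (fun y => f r₅ y t) y₅ < c := by simpa [hyt] using h
        exact hcw.eventually (eventually_lt_nhds (by simpa [hyt] using h))
      have hev' : ∀ᶠ w in nhdsWithin y₅ (Set.Ioi y₅), f r₅ w t < c :=
        hev.filter_mono (nhdsWithin_mono y₅ Ioi_subset_Ici_self)
      obtain ⟨b, hb, hsub⟩ := mem_nhdsGT_iff_exists_Ioo_subset.mp hev'
      obtain ⟨w, hw1, hw2⟩ := exists_between (mem_Ioi.mp hb)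
      obtain ⟨w', hw'1, hw'2⟩ := exists_between hw2
      have hws : x ≤ f r₅ w s := by
        have := flow_mono f hf hr₅s.le hw1.le
        rwa [hval] at this
      have hw't : f r₅ w' t < c := hsub ⟨lt_trans hw1 hw'1, hw'2⟩
      exact flow_rat_wit f hf hr₅s hst hw'1 hws hw't
    · -- x is not in the range at time s
      have hcw : ContinuousWithinAt (fun y => f s y t) (Set.Ici x) x := hF3 s t hst x hx
      have hev : ∀ᶠ x' in nhdsWithin x (Set.Ici x), f s x' t < c :=
        hcw.eventually (eventually_lt_nhds h)
      have hev' : ∀ᶠ x' in nhdsWithin x (Set.Ioi x), f s x' t < c :=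
        hev.filter_mono (nhdsWithin_mono x Ioi_subset_Ici_self)
      obtain ⟨b, hb, hsub⟩ := mem_nhdsGT_iff_exists_Ioo_subset.mp hev'
      obtain ⟨a, ha_mem, ha⟩ := (hF2 s).exists_between hb
      obtain ⟨a', ha'_mem, ha'⟩ := (hF2 s).exists_between ha.2
      obtain ⟨r, z, hrlt, hrz⟩ := ha_mem
      obtain ⟨r', z', hr'lt, hr'z⟩ := ha'_mem
      set ρ := max r r' with hρ
      have hρs : ρ < s := max_lt hrlt hr'lt
      have hrρ : r ≤ ρ := le_max_left r r'
      have hr'ρ : r' ≤ ρ := le_max_right r r'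
      have hws : f ρ (f r z ρ) s = a := by
        rw [hF1 r ρ s z hrρ hρs.le, hrz]
      have hw's : f ρ (f r' z' ρ) s = a' := by
        rw [hF1 r' ρ s z' hr'ρ hρs.le, hr'z]
      have hw't : f ρ (f r' z' ρ) t < c := by
        rw [hF1 r' ρ t z' hr'ρ (le_trans hρs.le hst)]
        rw [← hF1 r' s t z' hr'lt.le hst, hr'z]
        exact hsub ⟨lt_trans ha.1 ha'.1, ha'.2⟩
      have hww' : f r z ρ < f r' z' ρ := by
        by_contra hle
        push_neg at hle
        have := flow_mono f hf hρs.le hle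
        rw [hws, hw's] at this
        exact absurd this (not_le.mpr ha'.1)
      have hxw : x ≤ f ρ (f r z ρ) s := by rw [hws]; exact ha.1.le
      exact flow_rat_wit f hf hρs hst hww' hxw hw't
  · -- backward direction
    rintro ⟨p, u, hps, hxu, hputc⟩
    have h1 : f s x s ≤ f (p:ℝ) (u:ℝ) s := by rw [h0]; exact hxu
    have h2 : f s x t ≤ f (p:ℝ) (u:ℝ) t :=
      flow_no_cross f hf le_rfl hps.le hst h1
    linarith
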